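/- For the Fermat cubic f = x_0^3 + ⋯ + x_n^3 with n ≥ 1, the ideal generated by the products ∂_i∂_j (i ≠ j) is strictly contained in f^⊥; specifically ∂_0^3 − ∂_1^3 ∈ f^⊥ but ∂_0^3 − ∂_1^3 ∉ (∂_i∂_j : i ≠ j). -/

import Mathlib

open MvPolynomial

noncomputable def apolAct {n : ℕ} (D f : MvPolynomial (Fin n) ℂ) :
    MvPolynomial (Fin n) ℂ :=
  (AddMonoidAlgebra.coeff D).sum fun a c =>
    c • ((List.finRange n).foldl
      (fun g i => (((MvPolynomial.pderiv i).toLinearMap : Module.End ℂ (MvPolynomial (Fin n) ℂ)) ^ (a i)) g) f)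

namespace ApolAux

variable {N : ℕ}

noncomputable def pd (i : Fin N) : Module.End ℂ (MvPolynomial (Fin N) ℂ) :=
  (MvPolynomial.pderiv i).toLinearMap

lemma pd_apply (i : Fin N) (g : MvPolynomial (Fin N) ℂ) : pd i g = pderiv i g := rfl

noncomputable def fo (a : Fin N →₀ ℕ) (f : MvPolynomial (Fin N) ℂ) (l : List (Fin N)) :
    MvPolynomial (Fin N) ℂ :=
  l.foldl (fun g i => ((pd i) ^ (a i)) g) f

lemma apolAct_eq (D f : MvPolynomial (Fin N) ℂ) :
    apolAct D f = (AddMonoidAlgebra.coeff D).sum fun a c => c • fo a f (List.finRange N) := rfl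

lemma fo_nil (a : Fin N →₀ ℕ) (f : MvPolynomial (Fin N) ℂ) : fo a f [] = f := rfl

lemma fo_cons (a : Fin N →₀ ℕ) (f : MvPolynomial (Fin N) ℂ) (i : Fin N) (t : List (Fin N)) :
    fo a f (i :: t) = fo a (((pd i) ^ (a i)) f) t := rfl

lemma fo_zero (a : Fin N →₀ ℕ) (l : List (Fin N)) : fo a 0 l = 0 := by
  induction l with
  | nil => rfl
  | cons i t ih => rw [fo_cons, map_zero]; exact ih

lemma fo_of_forall_zero (a : Fin N →₀ ℕ) (f : MvPolynomial (Fin N) ℂ) (l : List (Fin N))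
    (h : ∀ i ∈ l, a i = 0) : fo a f l = f := by
  induction l generalizing f with
  | nil => rfl
  | cons i t ih =>
      rw [fo_cons, h i List.mem_cons_self, pow_zero, Module.End.one_apply]
      exact ih f fun j hj => h j (List.mem_cons_of_mem _ hj)

lemma fo_single (k : Fin N) (m : ℕ) (f : MvPolynomial (Fin N) ℂ) (l : List (Fin N))
    (hnd : l.Nodup) (hk : k ∈ l) :
    fo (Finsupp.single k m) f l = ((pd k) ^ m) f := by
  induction l generalizing f with
  | nil => simp at hk
  | cons i t ih =>
      rcases List.mem_cons.mp hk with h | h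
      · subst h
        rw [fo_cons, Finsupp.single_eq_same]
        refine fo_of_forall_zero _ _ _ fun j hj => ?_
        have : j ≠ k := fun e => (List.nodup_cons.mp hnd).1 (e ▸ hj)
        simp [Finsupp.single_apply, this.symm]
      · have hik : i ≠ k := fun e => by
          exact (List.nodup_cons.mp hnd).1 (e ▸ h)
        rw [fo_cons, Finsupp.single_apply]
        rw [if_neg (fun e => hik e.symm)]
        rw [pow_zero, Module.End.one_apply]
        exact ih f (List.nodup_cons.mp hnd).2 h

lemma single_tsub (k : Fin N) (t : ℕ) :
    (Finsupp.single k t) - (Finsupp.single k 1) = Finsupp.single k (t - 1) := by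
  ext m
  by_cases h : m = k <;> simp [Finsupp.tsub_apply, Finsupp.single_apply, h]

lemma pow_pd_Xcube (k : Fin N) (s : ℕ) :
    ∃ (t : ℕ) (c : ℂ), ((pd k) ^ s) (X k ^ 3 : MvPolynomial (Fin N) ℂ)
      = monomial (Finsupp.single k t) c := by
  induction s with
  | zero => exact ⟨3, 1, by rw [pow_zero, Module.End.one_apply, X_pow_eq_monomial]⟩
  | succ s ih =>
      obtain ⟨t, c, hc⟩ := ih
      refine ⟨t - 1, c * t, ?_⟩
      rw [pow_succ', Module.End.mul_apply, hc, pd_apply, pderiv_monomial, single_tsub,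
        Finsupp.single_eq_same]

lemma pow_pd_ne (j k : Fin N) (h : j ≠ k) (m : ℕ) (hm : 1 ≤ m) (s : ℕ) :
    ((pd j) ^ m) (((pd k) ^ s) (X k ^ 3 : MvPolynomial (Fin N) ℂ)) = 0 := by
  obtain ⟨t, c, hc⟩ := pow_pd_Xcube k s
  obtain ⟨m', rfl⟩ : ∃ m', m = m' + 1 := ⟨m - 1, by omega⟩
  rw [hc, pow_succ, Module.End.mul_apply, pd_apply, pderiv_monomial,
    Finsupp.single_apply, if_neg (fun e => h e.symm)]
  simp

lemma fo_mixed (a : Fin N →₀ ℕ) (k : Fin N) (l : List (Fin N)) (s : ℕ)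
    (h : ∃ j ∈ l, j ≠ k ∧ 1 ≤ a j) :
    fo a (((pd k) ^ s) (X k ^ 3 : MvPolynomial (Fin N) ℂ)) l = 0 := by
  induction l generalizing s with
  | nil => obtain ⟨j, hj, _⟩ := h; simp at hj
  | cons i t ih =>
      obtain ⟨j, hj, hjk, haj⟩ := h
      by_cases hik : i = k
      · subst hik
        rw [fo_cons]
        have : ((pd i) ^ (a i)) (((pd i) ^ s) (X i ^ 3 : MvPolynomial (Fin N) ℂ))
            = ((pd i) ^ (a i + s)) (X i ^ 3) := by
          rw [pow_add, Module.End.mul_apply]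
        rw [this]
        refine ih (a i + s) ⟨j, ?_, hjk, haj⟩
        rcases List.mem_cons.mp hj with e | e
        · exact absurd e hjk
        · exact e
      · by_cases hai : a i = 0
        · rw [fo_cons, hai, pow_zero, Module.End.one_apply]
          refine ih s ⟨j, ?_, hjk, haj⟩
          rcases List.mem_cons.mp hj with e | e
          · exact absurd (e ▸ haj) (by omega)
          · exact e
        · rw [fo_cons, pow_pd_ne i k hik (a i) (by omega) s]
          exact fo_zero a t

lemma fo_sum {ι : Type*} (a : Fin N →₀ ℕ) (s : Finset ι) (g : ι → MvPolynomial (Fin N) ℂ)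
    (l : List (Fin N)) : fo a (∑ i ∈ s, g i) l = ∑ i ∈ s, fo a (g i) l := by
  induction l generalizing g with
  | nil => rfl
  | cons i t ih => rw [fo_cons, map_sum]; exact ih _

end ApolAux

namespace ApolAux

lemma apolAct_mixed {N : ℕ} (D : MvPolynomial (Fin N) ℂ)
    (hD : ∀ a ∈ D.support, ∃ i j : Fin N, i ≠ j ∧ 1 ≤ a i ∧ 1 ≤ a j) :
    apolAct D (∑ i : Fin N, X i ^ 3) = 0 := by
  rw [apolAct_eq, Finsupp.sum]
  refine Finset.sum_eq_zero fun a ha => ?_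
  obtain ⟨i, j, hij, hi, hj⟩ := hD a ha
  rw [fo_sum]
  have hz : ∀ k : Fin N, fo a (X k ^ 3) (List.finRange N) = 0 := by
    intro k
    have hstart : (X k ^ 3 : MvPolynomial (Fin N) ℂ) = ((pd k) ^ 0) (X k ^ 3) := by
      rw [pow_zero, Module.End.one_apply]
    rw [hstart]
    by_cases hik : i = k
    · exact fo_mixed a k _ 0 ⟨j, List.mem_finRange j, fun e => hij (hik.trans e.symm), hj⟩
    · exact fo_mixed a k _ 0 ⟨i, List.mem_finRange i, hik, hi⟩
  rw [Finset.sum_eq_zero fun k _ => hz k, smul_zero]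

lemma span_mixed {N : ℕ} (D : MvPolynomial (Fin N) ℂ)
    (hD : D ∈ Ideal.span {p : MvPolynomial (Fin N) ℂ | ∃ i j, i ≠ j ∧ p = X i * X j}) :
    ∀ a ∈ D.support, ∃ i j : Fin N, i ≠ j ∧ 1 ≤ a i ∧ 1 ≤ a j := by
  refine Submodule.span_induction ?_ ?_ ?_ ?_ hD
  · rintro p ⟨i, j, hij, rfl⟩ a ha
    have hXX : (X i * X j : MvPolynomial (Fin N) ℂ)
        = monomial (Finsupp.single i 1 + Finsupp.single j 1) 1 := by
      have h := monomial_mul (σ := Fin N) (R := ℂ) (s := Finsupp.single i 1)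
        (s' := Finsupp.single j 1) (a := 1) (b := 1)
      rw [one_mul] at h
      exact h
    rw [hXX] at ha
    rw [support_monomial, if_neg one_ne_zero, Finset.mem_singleton] at ha
    subst ha
    exact ⟨i, j, hij, by simp [Finsupp.single_apply, hij, hij.symm]⟩
  · simp
  · intro x y _ _ hx hy a ha
    rcases Finset.mem_union.mp (support_add ha) with h | h
    · exact hx a h
    · exact hy a h
  · intro r x _ hx a ha
    rw [smul_eq_mul] at ha
    obtain ⟨b, hb, c, hc, rfl⟩ := Finset.mem_add.mp (support_mul r x ha)
    obtain ⟨i, j, hij, hi, hj⟩ := hx c hc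
    exact ⟨i, j, hij, by simp only [Finsupp.add_apply]; omega, by simp only [Finsupp.add_apply]; omega⟩

lemma key {N : ℕ} (k : Fin N) :
    ((pd k) ^ 3) (∑ i : Fin N, X i ^ 3) = C 6 := by
  have hpow : ∀ g : MvPolynomial (Fin N) ℂ,
      ((pd k) ^ 3) g = pderiv k (pderiv k (pderiv k g)) := fun g => by
    rw [pow_succ, pow_succ, pow_one, Module.End.mul_apply, Module.End.mul_apply]; rfl
  rw [hpow, map_sum, map_sum, map_sum]
  rw [Finset.sum_eq_single_of_mem k (Finset.mem_univ k)]
  · rw [X_pow_eq_monomial, pderiv_monomial, single_tsub, pderiv_monomial, single_tsub,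
      pderiv_monomial, single_tsub]
    simp
    rw [← C_mul]; norm_num
  · intro i _ hik
    rw [X_pow_eq_monomial, pderiv_monomial, Finsupp.single_apply, if_neg hik]
    simp

end ApolAux

open ApolAux in
theorem stmt_3 (n : ℕ) (hn : 1 ≤ n) :
    apolAct ((X 0) ^ 3 - (X 1) ^ 3 : MvPolynomial (Fin (n + 1)) ℂ)
        (∑ i, X i ^ 3) = 0 ∧
    ((X 0) ^ 3 - (X 1) ^ 3 : MvPolynomial (Fin (n + 1)) ℂ) ∉
      Ideal.span {p : MvPolynomial (Fin (n + 1)) ℂ | ∃ i j, i ≠ j ∧ p = X i * X j} ∧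
    ↑(Ideal.span {p : MvPolynomial (Fin (n + 1)) ℂ | ∃ i j, i ≠ j ∧ p = X i * X j})
      ⊂ {D : MvPolynomial (Fin (n + 1)) ℂ | apolAct D (∑ i, X i ^ 3) = 0} := by
  have h10 : (1 : Fin (n + 1)) ≠ 0 := by
    simp [Fin.ext_iff, Fin.val_one, Nat.mod_eq_of_lt (by omega : 1 < n + 1)]
  have ha01 : (Finsupp.single (0 : Fin (n+1)) 3) ≠ Finsupp.single (1 : Fin (n+1)) 3 := by
    intro h
    have := DFunLike.congr_fun h 0
    simp [Finsupp.single_apply, h10] at this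
  -- Part 1
  have part1 : apolAct ((X 0) ^ 3 - (X 1) ^ 3 : MvPolynomial (Fin (n + 1)) ℂ)
      (∑ i, X i ^ 3) = 0 := by
    set D : MvPolynomial (Fin (n+1)) ℂ := (X 0) ^ 3 - (X 1) ^ 3 with hDdef
    have hsupp : D.support ⊆ {Finsupp.single (0 : Fin (n+1)) 3, Finsupp.single 1 3} := by
      refine (support_sub _ _ _).trans ?_
      rw [X_pow_eq_monomial, X_pow_eq_monomial, support_monomial, support_monomial,
        if_neg one_ne_zero, if_neg one_ne_zero]
      intro a ha
      simpa using ha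
    rw [apolAct_eq]
    rw [Finsupp.sum_of_support_subset (AddMonoidAlgebra.coeff D) hsupp _ (fun a _ => by rw [zero_smul])]
    rw [Finset.sum_pair ha01]
    have hc0 : coeff (Finsupp.single (0 : Fin (n+1)) 3) D = 1 := by
      rw [hDdef, coeff_sub, coeff_X_pow, coeff_X_pow, if_pos rfl, if_neg ha01.symm]
      norm_num
    have hc1 : coeff (Finsupp.single (1 : Fin (n+1)) 3) D = -1 := by
      rw [hDdef, coeff_sub, coeff_X_pow, coeff_X_pow, if_pos rfl, if_neg ha01]
      norm_num
    show coeff _ D • _ + coeff _ D • _ = 0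
    rw [hc0, hc1,
      fo_single _ _ _ _ (List.nodup_finRange _) (List.mem_finRange _),
      fo_single _ _ _ _ (List.nodup_finRange _) (List.mem_finRange _),
      key, key]
    simp
  have part2 : ((X 0) ^ 3 - (X 1) ^ 3 : MvPolynomial (Fin (n + 1)) ℂ) ∉
      Ideal.span {p : MvPolynomial (Fin (n + 1)) ℂ | ∃ i j, i ≠ j ∧ p = X i * X j} := by
    intro hmem
    set φ := (aeval (R := ℂ) (fun i : Fin (n+1) => if i = 0 then (Polynomial.X : Polynomial ℂ) else 0))
    have hker : Ideal.span {p : MvPolynomial (Fin (n + 1)) ℂ | ∃ i j, i ≠ j ∧ p = X i * X j}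
        ≤ RingHom.ker (φ : MvPolynomial (Fin (n+1)) ℂ →+* Polynomial ℂ) := by
      rw [Ideal.span_le]
      rintro p ⟨i, j, hij, rfl⟩
      have : φ (X i * X j) = 0 := by
        rw [map_mul, aeval_X, aeval_X]
        by_cases hi : i = 0
        · rw [if_neg (fun hj0 : j = 0 => hij (hi.trans hj0.symm)), mul_zero]
        · rw [if_neg hi, zero_mul]
      exact this
    have h0 : φ ((X 0) ^ 3 - (X 1) ^ 3 : MvPolynomial (Fin (n + 1)) ℂ) = 0 := hker hmem
    rw [map_sub, map_pow, map_pow, aeval_X, aeval_X, if_pos rfl, if_neg h10] at h0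
    simp at h0
  refine ⟨part1, part2, ?_⟩
  -- Part 3
  have hsub : ↑(Ideal.span {p : MvPolynomial (Fin (n + 1)) ℂ | ∃ i j, i ≠ j ∧ p = X i * X j})
        ⊆ {D : MvPolynomial (Fin (n + 1)) ℂ | apolAct D (∑ i, X i ^ 3) = 0} := by
    intro D hD
    exact apolAct_mixed D (span_mixed D hD)
  exact (Set.ssubset_iff_of_subset hsub).mpr ⟨(X 0) ^ 3 - (X 1) ^ 3, part1, part2⟩
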